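/- Let {G_i}_{i ∈ I} be a family of normally poly-free groups each of normally poly-free length at most n. Then the free product ∗_{i ∈ I} G_i is a normally poly-free group of length at most n. -/

import Mathlib

universe u v

/-- Poly-free with a subnormal chain of length `n` (length at most `n`,
since successive subgroups may coincide): there is a chain
`1 = G₀ ⊴ G₁ ⊴ ⋯ ⊴ Gₙ = G` with each quotient `Gᵢ₊₁/Gᵢ` a free group. -/
def IsPolyFreeOfLen : ℕ → (G : Type u) → [Group G] → Prop
  | 0, G, _ => Subsingleton G
  | n + 1, G, _ => ∃ (N : Subgroup G) (_ : N.Normal),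
      IsPolyFreeOfLen n N ∧ IsFreeGroup (G ⧸ N)

/-- A group is poly-free if it admits a subnormal chain with free quotients. -/
def IsPolyFree (G : Type u) [Group G] : Prop := ∃ n, IsPolyFreeOfLen n G

/-- Normally poly-free with a chain of length `n`: a chain
`1 = G₀ ≤ G₁ ≤ ⋯ ≤ Gₙ = G` with every `Gᵢ` normal in `G` and every quotient
`Gᵢ₊₁/Gᵢ` a free group (expressed via a surjection onto a free group whose
kernel is the previous term). -/
def IsNormallyPolyFreeOfLen (n : ℕ) (G : Type u) [Group G] : Prop :=
  ∃ c : Fin (n + 1) → Subgroup G,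
    c 0 = ⊥ ∧ c (Fin.last n) = ⊤ ∧ (∀ i : Fin n, c i.castSucc ≤ c i.succ) ∧
    (∀ i, (c i).Normal) ∧
    ∀ i : Fin n, ∃ (F : Type u) (_ : Group F) (f : ↥(c i.succ) →* F),
      IsFreeGroup F ∧ Function.Surjective f ∧
      f.ker = (c i.castSucc).subgroupOf (c i.succ)

/-- A group is normally poly-free if it admits such a chain of some length. -/
def IsNormallyPolyFree (G : Type u) [Group G] : Prop :=
  ∃ n, IsNormallyPolyFreeOfLen n G




open Monoid Monoid.CoprodI Function

namespace NPFAux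

variable {ι : Type*} [DecidableEq ι] {H : ι → Type*} [∀ i, Group (H i)] {X : ι → Type*}
  [∀ i, Group (X i)] [∀ i, DecidableEq (X i)]

/-- Section of a surjective hom, sending `1` to `1`. -/
noncomputable def sec (f : ∀ i, H i →* X i) (hf : ∀ i, Surjective (f i)) (i : ι) (x : X i) :
    H i :=
  if x = 1 then 1 else surjInv (hf i) x

omit [DecidableEq ι] in
theorem sec_spec (f : ∀ i, H i →* X i) (hf : ∀ i, Surjective (f i)) (i : ι) (x : X i) :
    f i (sec f hf i x) = x := by
  unfold sec
  split_ifs with h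
  · simp [h]
  · exact surjInv_eq (hf i) x

omit [DecidableEq ι] in
@[simp] theorem sec_one (f : ∀ i, H i →* X i) (hf : ∀ i, Surjective (f i)) (i : ι) :
    sec f hf i 1 = 1 := if_pos rfl

theorem prod_equiv (g : CoprodI X) : Word.prod (Word.equiv g) = g :=
  Word.equiv.symm_apply_apply g

theorem equiv_prod (w : Word X) : Word.equiv (Word.prod w) = w :=
  Word.equiv.apply_symm_apply w

theorem equiv_one : Word.equiv (1 : CoprodI X) = Word.empty := by
  have h := equiv_prod (Word.empty : Word X)
  rwa [Word.prod_empty] at h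

theorem equiv_apply (g : CoprodI X) : Word.equiv g = g • Word.empty := rfl

theorem equiv_mul_of {i : ι} (m : X i) (g : CoprodI X) :
    Word.equiv (of m * g) = of m • Word.equiv g := by
  rw [equiv_apply, equiv_apply, mul_smul]

/-- `q` does not end in a letter from factor `i`. -/
def NotEnd (i : ι) (q : CoprodI X) : Prop := Word.fstIdx (Word.equiv (q⁻¹)) ≠ some i

theorem notEnd_one (i : ι) : NotEnd i (1 : CoprodI X) := by
  simp [NotEnd, equiv_one, Word.fstIdx]

/-- right tail: `q = tailx i q * of (headx i q)` with `NotEnd i (tailx i q)`. -/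
noncomputable def tailx (i : ι) (q : CoprodI X) : CoprodI X :=
  (Word.prod (Word.equivPair i (Word.equiv (q⁻¹))).tail)⁻¹

noncomputable def headx (i : ι) (q : CoprodI X) : X i :=
  ((Word.equivPair i (Word.equiv (q⁻¹))).head)⁻¹

theorem notEnd_tailx (i : ι) (q : CoprodI X) : NotEnd i (tailx i q) := by
  unfold NotEnd tailx
  rw [inv_inv, equiv_prod]
  exact (Word.equivPair i (Word.equiv (q⁻¹))).fstIdx_ne

theorem tailx_mul_headx (i : ι) (q : CoprodI X) : tailx i q * of (headx i q) = q := by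
  unfold tailx headx
  have h1 : q⁻¹ = Word.prod (Word.equiv (q⁻¹)) := (prod_equiv (q⁻¹)).symm
  have h2 : Word.prod (Word.equiv (q⁻¹))
      = of (Word.equivPair i (Word.equiv (q⁻¹))).head
        * Word.prod (Word.equivPair i (Word.equiv (q⁻¹))).tail := by
    conv_lhs => rw [← Word.equivPair_head_smul_equivPair_tail (i := i) (Word.equiv (q⁻¹))]
    rw [Word.prod_smul]
  rw [MonoidHom.map_inv, ← mul_inv_rev, ← h2, ← h1, inv_inv]

theorem tailx_headx_eq {i : ι} {x : CoprodI X} (hx : NotEnd i x) (l : X i) :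
    tailx i (x * of l) = x ∧ headx i (x * of l) = l := by
  have h1 : Word.equiv ((x * of l)⁻¹) = of (l⁻¹) • Word.equiv (x⁻¹) := by
    rw [mul_inv_rev, ← MonoidHom.map_inv, equiv_mul_of]
  have h2 : Word.equivPair i (Word.equiv ((x * of l)⁻¹))
      = ⟨l⁻¹, Word.equiv (x⁻¹), hx⟩ := by
    rw [h1, Word.equivPair_smul_same, Word.equivPair_eq_of_fstIdx_ne hx]
    simp
  constructor
  · unfold tailx
    rw [h2]
    simp only
    rw [prod_equiv (x⁻¹), inv_inv]
  · unfold headx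
    rw [h2]
    simp


section Sig

variable (f : ∀ i, H i →* X i) (hf : ∀ i, Surjective (f i))

omit [DecidableEq ι] [∀ i, DecidableEq (X i)] in
/-- The canonical homomorphism `∗ᵢ Hᵢ →* ∗ᵢ Xᵢ`. -/
def Phi : CoprodI H →* CoprodI X := CoprodI.lift (fun i => (of : X i →* CoprodI X).comp (f i))

omit [DecidableEq ι] [∀ i, DecidableEq (X i)] in
@[simp] theorem Phi_of {i : ι} (h : H i) : Phi f (of h) = of (f i h) := by
  simp [Phi]

noncomputable def mu (w : Word X) : CoprodI H :=
  ((w.toList.map (fun z => (of (sec f hf z.1 (z.2⁻¹)))⁻¹)).prod)⁻¹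

theorem mu_empty : mu f hf (Word.empty : Word X) = 1 := by
  simp [mu, Word.empty]

theorem mu_cons {i : ι} (m : X i) (w : Word X) (hmw : Word.fstIdx w ≠ some i) (h1 : m ≠ 1) :
    mu f hf (Word.cons m w hmw h1) = mu f hf w * of (sec f hf i (m⁻¹)) := by
  simp [mu, Word.cons, List.map_cons, List.prod_cons, mul_inv_rev]

theorem Phi_mu (w : Word X) : Phi f (mu f hf w) = (Word.prod w)⁻¹ := by
  rw [mu, map_inv, map_list_prod, List.map_map, Word.prod]
  exact congrArg Inv.inv (congrArg List.prod
    (List.map_congr_left (fun z _ => by simp [Function.comp, sec_spec f hf])))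

/-- The set-theoretic section of `Phi f`, mapping letters via `sec`. -/
noncomputable def sig (q : CoprodI X) : CoprodI H := mu f hf (Word.equiv (q⁻¹))

theorem Phi_sig (q : CoprodI X) : Phi f (sig f hf q) = q := by
  rw [sig, Phi_mu, prod_equiv, inv_inv]

theorem sig_one : sig f hf (1 : CoprodI X) = 1 := by
  rw [sig, inv_one, equiv_one, mu_empty]

theorem sig_mul {i : ι} {x : CoprodI X} (hx : NotEnd i x) (l : X i) :
    sig f hf (x * of l) = sig f hf x * of (sec f hf i l) := by
  rcases eq_or_ne l 1 with rfl | hl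
  · simp [sig]
  · have h1 : Word.equiv ((x * of l)⁻¹)
        = Word.cons (l⁻¹) (Word.equiv (x⁻¹)) (@id (Word.fstIdx (Word.equiv (x⁻¹)) ≠ some i) hx)
            (inv_ne_one.2 hl) := by
      rw [mul_inv_rev, ← MonoidHom.map_inv, equiv_mul_of, Word.cons_eq_smul]
    rw [sig, h1, mu_cons, inv_inv, ← sig]

theorem tailx_mul_of (i : ι) (q : CoprodI X) (m : X i) :
    tailx i (q * of m) = tailx i q := by
  conv_lhs => rw [← tailx_mul_headx i q, mul_assoc, ← MonoidHom.map_mul]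
  exact (tailx_headx_eq (notEnd_tailx i q) _).1

theorem headx_mul_of (i : ι) (q : CoprodI X) (m : X i) :
    headx i (q * of m) = headx i q * m := by
  conv_lhs => rw [← tailx_mul_headx i q, mul_assoc, ← MonoidHom.map_mul]
  exact (tailx_headx_eq (notEnd_tailx i q) _).2

theorem tailx_of_notEnd {i : ι} {x : CoprodI X} (hx : NotEnd i x) : tailx i x = x := by
  have := (tailx_headx_eq hx (1 : X i)).1
  rwa [map_one, mul_one] at this

theorem headx_of_notEnd {i : ι} {x : CoprodI X} (hx : NotEnd i x) : headx i x = 1 := by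
  have := (tailx_headx_eq hx (1 : X i)).2
  rwa [map_one, mul_one] at this

end Sig

section Wreath

/-- Index type for the Kurosh-type free decomposition of the kernel. -/
abbrev PIdx (X : ι → Type*) [∀ i, Group (X i)] [∀ i, DecidableEq (X i)] : Type _ :=
  Σ i : ι, {x : CoprodI X // NotEnd i x}

variable (f : ∀ i, H i →* X i) (hf : ∀ i, Surjective (f i))

/-- The free product of the per-factor kernels, indexed by `PIdx`. -/
abbrev DD : Type _ := CoprodI (fun p : PIdx X => ↥((f p.1).ker))

/-- Translation action of `∗ᵢ Xᵢ` on functions `∗ᵢ Xᵢ → DD`. -/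
def tr : CoprodI X →* MulAut (∀ _ : CoprodI X, DD f) :=
  MonoidHom.mk' (fun t =>
    { toFun := fun F q => F (q * t)
      invFun := fun F q => F (q * t⁻¹)
      left_inv := fun F => by funext q; simp [mul_assoc]
      right_inv := fun F => by funext q; simp [mul_assoc]
      map_mul' := fun F G => rfl })
    (fun a b => by
      ext F q
      show F (q * (a * b)) = F (q * a * b)
      rw [mul_assoc])

@[simp] theorem tr_apply (t : CoprodI X) (F : ∀ _ : CoprodI X, DD f) (q : CoprodI X) :
    tr f t F q = F (q * t) := rfl

noncomputable def pt (i : ι) (q : CoprodI X) : {x : CoprodI X // NotEnd i x} :=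
  ⟨tailx i q, notEnd_tailx i q⟩

theorem pt_mul_of (i : ι) (q : CoprodI X) (m : X i) : pt i (q * of m) = pt i q :=
  Subtype.ext (tailx_mul_of i q m)

/-- One letter of the rewriting process. -/
noncomputable def letterAt (i : ι) (t : {x : CoprodI X // NotEnd i x}) (l : X i) (h : H i) :
    DD f :=
  CoprodI.of (i := (⟨i, t⟩ : PIdx X))
    ⟨sec f hf i l * h * (sec f hf i (l * f i h))⁻¹, by
      simp only [MonoidHom.mem_ker, map_mul, map_inv, sec_spec f hf]
      group⟩

theorem letterAt_mul (i : ι) (t : {x : CoprodI X // NotEnd i x}) (l : X i) (h₁ h₂ : H i) :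
    letterAt f hf i t l (h₁ * h₂) = letterAt f hf i t l h₁ * letterAt f hf i t (l * f i h₁) h₂ := by
  unfold letterAt
  rw [← MonoidHom.map_mul]
  congr 1
  apply Subtype.ext
  push_cast
  simp [mul_assoc, map_mul]

theorem letterAt_ker (i : ι) (t : {x : CoprodI X // NotEnd i x}) (k : ↥((f i).ker)) :
    letterAt f hf i t 1 (↑k) = CoprodI.of (i := (⟨i, t⟩ : PIdx X)) k := by
  unfold letterAt
  congr 1
  apply Subtype.ext
  push_cast
  simp [MonoidHom.mem_ker.1 k.2]

theorem letterAt_sec (i : ι) (t : {x : CoprodI X // NotEnd i x}) (m : X i) :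
    letterAt f hf i t 1 (sec f hf i m) = 1 := by
  unfold letterAt
  rw [← MonoidHom.map_one (CoprodI.of (i := (⟨i, t⟩ : PIdx X)))]
  congr 1
  apply Subtype.ext
  push_cast
  simp [sec_spec f hf]

/-- The base-component of the wreath embedding on the factor `H i`. -/
noncomputable def dfun (i : ι) (h : H i) : ∀ _ : CoprodI X, DD f := fun q =>
  letterAt f hf i (pt i q) (headx i q) h

theorem dfun_notEnd {i : ι} {x : CoprodI X} (hx : NotEnd i x) (h : H i) :
    dfun f hf i h x = letterAt f hf i ⟨x, hx⟩ 1 h := by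
  unfold dfun
  rw [headx_of_notEnd hx]
  congr 1
  exact Subtype.ext (tailx_of_notEnd hx)

theorem dfun_mul (i : ι) (h₁ h₂ : H i) (q : CoprodI X) :
    dfun f hf i (h₁ * h₂) q = dfun f hf i h₁ q * dfun f hf i h₂ (q * of (f i h₁)) := by
  unfold dfun
  rw [pt_mul_of, headx_mul_of, letterAt_mul]

/-- The wreath-type embedding `∗ᵢ Hᵢ →* (∏ DD) ⋊ ∗ᵢ Xᵢ`. -/
noncomputable def theta :
    CoprodI H →* SemidirectProduct (∀ _ : CoprodI X, DD f) (CoprodI X) (tr f) :=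
  CoprodI.lift (fun i => MonoidHom.mk' (fun h => ⟨dfun f hf i h, of (f i h)⟩)
    (fun h₁ h₂ => by
      apply SemidirectProduct.ext
      · funext q
        show dfun f hf i (h₁ * h₂) q = (_ * tr f (of (f i h₁)) (dfun f hf i h₂)) q
        rw [dfun_mul]
        rfl
      · simp [map_mul]))

@[simp] theorem theta_of {i : ι} (h : H i) :
    theta f hf (of h) = ⟨dfun f hf i h, of (f i h)⟩ := by
  simp [theta]

theorem theta_right (g : CoprodI H) : (theta f hf g).right = Phi f g := by
  have : (SemidirectProduct.rightHom.comp (theta f hf)) = Phi f := by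
    apply CoprodI.ext_hom
    intro i
    ext h
    simp
  exact DFunLike.congr_fun this g

theorem theta_left_mul (g₁ g₂ : CoprodI H) (q : CoprodI X) :
    (theta f hf (g₁ * g₂)).left q
      = (theta f hf g₁).left q * (theta f hf g₂).left (q * Phi f g₁) := by
  rw [map_mul, SemidirectProduct.mul_left]
  show _ * (tr f (theta f hf g₁).right (theta f hf g₂).left) q = _
  rw [tr_apply, theta_right]

theorem theta_left_inv (g : CoprodI H) (q : CoprodI X) :
    (theta f hf (g⁻¹)).left q = ((theta f hf g).left (q * (Phi f g)⁻¹))⁻¹ := by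
  rw [map_inv, SemidirectProduct.inv_left]
  show (tr f (theta f hf g).right⁻¹ ((theta f hf g).left)⁻¹) q = _
  rw [tr_apply, theta_right]
  rfl

theorem theta_mu (w : Word X) : (theta f hf (mu f hf w)).left 1 = 1 := by
  induction w using Word.consRecOn with
  | empty =>
    rw [mu_empty, map_one]
    rfl
  | cons i m w hmw h1 ih =>
    rw [mu_cons, theta_left_mul, ih, one_mul, Phi_mu, one_mul, theta_of]
    show dfun f hf i (sec f hf i (m⁻¹)) ((Word.prod w)⁻¹) = 1
    have hx : NotEnd i ((Word.prod w)⁻¹) := by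
      unfold NotEnd
      rw [inv_inv, equiv_prod]
      exact hmw
    rw [dfun_notEnd f hf hx, letterAt_sec]

theorem theta_sig (x : CoprodI X) : (theta f hf (sig f hf x)).left 1 = 1 :=
  theta_mu f hf _

/-- The homomorphism from the free product of the kernels onto `ker (Phi f)`. -/
noncomputable def psi : DD f →* CoprodI H :=
  CoprodI.lift (fun p => (MulAut.conj (sig f hf p.2.val)).toMonoidHom.comp
    ((CoprodI.of (i := p.1)).comp ((f p.1).ker.subtype)))

theorem psi_of (p : PIdx X) (k : ↥((f p.1).ker)) :
    psi f hf (CoprodI.of (i := p) k)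
      = sig f hf p.2.val * of (k : H p.1) * (sig f hf p.2.val)⁻¹ := by
  simp [psi, MulAut.conj, mul_assoc]

theorem Phi_psi (d : DD f) : Phi f (psi f hf d) = 1 := by
  have h : (Phi f).comp (psi f hf) = 1 := by
    apply CoprodI.ext_hom
    intro p
    ext k
    simp only [MonoidHom.comp_apply, psi_of, MonoidHom.one_apply, map_mul, map_inv,
      Phi_of, Phi_sig, MonoidHom.mem_ker.1 k.2, map_one]
    group
  exact DFunLike.congr_fun h d

theorem lam_psi_of (p : PIdx X) (k : ↥((f p.1).ker)) :
    (theta f hf (psi f hf (CoprodI.of (i := p) k))).left 1 = CoprodI.of (i := p) k := by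
  obtain ⟨i, x, hx⟩ := p
  rw [psi_of]
  have hofk : Phi f (of (k : H i)) = 1 := by
    rw [Phi_of, MonoidHom.mem_ker.1 k.2, map_one]
  rw [mul_assoc, theta_left_mul, theta_sig, one_mul, one_mul, Phi_sig, theta_left_mul,
    hofk, mul_one, theta_left_inv, Phi_sig, mul_inv_cancel, theta_sig, inv_one, mul_one,
    theta_of]
  show dfun f hf i (k : H i) x = _
  rw [dfun_notEnd f hf hx, letterAt_ker]

theorem lam_psi (d : DD f) : (theta f hf (psi f hf d)).left 1 = d := by
  let lam : DD f →* DD f := MonoidHom.mk' (fun d => (theta f hf (psi f hf d)).left 1)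
    (fun d₁ d₂ => by
      rw [map_mul, theta_left_mul, Phi_psi, mul_one])
  have h : lam = MonoidHom.id (DD f) := by
    apply CoprodI.ext_hom
    intro p
    ext k
    exact lam_psi_of f hf p k
  exact DFunLike.congr_fun h d

theorem psi_injective : Injective (psi f hf) := by
  intro d₁ d₂ h
  rw [← lam_psi f hf d₁, ← lam_psi f hf d₂, h]

theorem conj_mem_range (g : CoprodI H) :
    ∀ x : CoprodI X, sig f hf x * g * (sig f hf (x * Phi f g))⁻¹ ∈ (psi f hf).range := by
  induction g using CoprodI.induction_on with
  | one =>
    intro x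
    rw [map_one, mul_one, mul_one, mul_inv_cancel]
    exact one_mem _
  | of i h =>
    intro x
    have hx' : NotEnd i (tailx i x) := notEnd_tailx i x
    have hdec : x = tailx i x * of (headx i x) := (tailx_mul_headx i x).symm
    have e1 : sig f hf x = sig f hf (tailx i x) * of (sec f hf i (headx i x)) := by
      conv_lhs => rw [hdec]
      rw [sig_mul f hf hx']
    have e2 : x * Phi f (of h) = tailx i x * of (headx i x * f i h) := by
      rw [Phi_of]
      conv_lhs => rw [hdec]
      rw [mul_assoc, ← MonoidHom.map_mul]
    rw [e2, sig_mul f hf hx', e1]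
    refine ⟨CoprodI.of (i := (⟨i, ⟨tailx i x, hx'⟩⟩ : PIdx X))
      ⟨sec f hf i (headx i x) * h * (sec f hf i (headx i x * f i h))⁻¹, by
        simp only [MonoidHom.mem_ker, map_mul, map_inv, sec_spec f hf]
        group⟩, ?_⟩
    rw [psi_of]
    simp only [mul_inv_rev, map_mul, map_inv]
    group
  | mul g₁ g₂ ih₁ ih₂ =>
    intro x
    have key : sig f hf x * (g₁ * g₂) * (sig f hf (x * Phi f (g₁ * g₂)))⁻¹
        = (sig f hf x * g₁ * (sig f hf (x * Phi f g₁))⁻¹)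
          * (sig f hf (x * Phi f g₁) * g₂ * (sig f hf (x * Phi f g₁ * Phi f g₂))⁻¹) := by
      rw [map_mul, ← mul_assoc]
      group
    rw [key]
    exact mul_mem (ih₁ x) (ih₂ (x * Phi f g₁))

theorem ker_le_psi_range (g : CoprodI H) (hg : g ∈ (Phi f).ker) : g ∈ (psi f hf).range := by
  have h := conj_mem_range f hf g 1
  simp only [MonoidHom.mem_ker.1 hg, sig_one, one_mul, mul_one, inv_one] at h
  exact h

end Wreath

theorem coprodI_subsingleton {ι : Type*} {M : ι → Type*} [∀ i, Monoid (M i)]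
    [∀ i, Subsingleton (M i)] : Subsingleton (CoprodI M) := by
  have h1 : ∀ a : CoprodI M, a = 1 := fun a =>
    CoprodI.induction_on a rfl (fun i m => by rw [Subsingleton.elim m 1, map_one])
      (fun x y hx hy => by rw [hx, hy, mul_one])
  exact ⟨fun a b => (h1 a).trans (h1 b).symm⟩

end NPFAux

namespace NPFAux

theorem Phi_surjective {ι : Type*} {H : ι → Type*} [∀ i, Group (H i)] {X : ι → Type*}
    [∀ i, Group (X i)] (f : ∀ i, H i →* X i) (hf : ∀ i, Surjective (f i)) :
    Surjective (Phi f) := by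
  intro z
  induction z using CoprodI.induction_on with
  | one => exact ⟨1, map_one _⟩
  | of i m =>
    obtain ⟨g, rfl⟩ := hf i m
    exact ⟨of g, Phi_of f g⟩
  | mul x y hx hy =>
    obtain ⟨a, rfl⟩ := hx
    obtain ⟨b, rfl⟩ := hy
    exact ⟨a * b, map_mul _ a b⟩

/-- **Key lemma** (a special case of the Kurosh subgroup theorem): if `f i : H i →* X i`
are surjective homomorphisms with free kernels, then the kernel of the induced map
`∗ᵢ Hᵢ →* ∗ᵢ Xᵢ` is a free group. -/
theorem isFreeGroup_ker_phi {ι : Type*} {H : ι → Type*} [∀ i, Group (H i)] {X : ι → Type*}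
    [∀ i, Group (X i)] (f : ∀ i, H i →* X i) (hf : ∀ i, Surjective (f i))
    (hker : ∀ i, IsFreeGroup ↥((f i).ker)) : IsFreeGroup ↥((Phi f).ker) := by
  letI : DecidableEq ι := Classical.decEq ι
  letI : ∀ i, DecidableEq (X i) := fun i => Classical.decEq (X i)
  haveI : ∀ p : PIdx X, IsFreeGroup ↥((f p.1).ker) := fun p => hker p.1
  haveI : IsFreeGroup (DD f) := inferInstance
  let psi' : DD f →* ↥((Phi f).ker) :=
    (psi f hf).codRestrict (Phi f).ker (fun d => MonoidHom.mem_ker.2 (Phi_psi f hf d))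
  have hinj : Injective psi' := by
    intro d₁ d₂ h
    exact psi_injective f hf (congrArg Subtype.val h)
  have hsurj : Surjective psi' := by
    rintro ⟨g, hg⟩
    obtain ⟨d, hd⟩ := ker_le_psi_range f hf g hg
    exact ⟨d, Subtype.ext hd⟩
  exact ((IsFreeGroup.basis (DD f)).map (MulEquiv.ofBijective psi' ⟨hinj, hsurj⟩)).isFreeGroup

end NPFAux


open Monoid Monoid.CoprodI Function in
/-- A free product of normally poly-free groups, each of normally poly-free length
at most `n`, is normally poly-free of length at most `n`. -/
theorem isNormallyPolyFreeOfLen_coprodI {ι : Type v} (G : ι → Type u) [∀ i, Group (G i)]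
    (n : ℕ) (h : ∀ i, IsNormallyPolyFreeOfLen n (G i)) :
    IsNormallyPolyFreeOfLen n (Monoid.CoprodI G) := by
  classical
  choose c h0 htop hmono hnorm hfree using h
  haveI : ∀ (j : ι) (k : Fin (n + 1)), (c j k).Normal := hnorm
  set mkk : ∀ (k : Fin (n + 1)) (j : ι), G j →* G j ⧸ c j k :=
    fun k j => QuotientGroup.mk' (c j k) with hmkk
  set Φk : ∀ k : Fin (n + 1), CoprodI G →* CoprodI (fun j => G j ⧸ c j k) :=
    fun k => NPFAux.Phi (mkk k) with hΦk
  set Tmap : ∀ (k : Fin n) (j : ι), (G j ⧸ c j k.castSucc) →* (G j ⧸ c j k.succ) :=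
    fun k j => QuotientGroup.map _ _ (MonoidHom.id (G j))
      (by rw [Subgroup.comap_id]; exact hmono j k) with hTmap
  set T : ∀ k : Fin n, CoprodI (fun j => G j ⧸ c j k.castSucc)
      →* CoprodI (fun j => G j ⧸ c j k.succ) := fun k => NPFAux.Phi (Tmap k) with hT
  have hTc : ∀ k : Fin n, (T k).comp (Φk k.castSucc) = Φk k.succ := by
    intro k
    apply CoprodI.ext_hom
    intro j
    ext g
    simp [hT, hΦk, hTmap, hmkk]
  refine ⟨fun k => (Φk k).ker, ?_, ?_, ?_, fun k => MonoidHom.normal_ker _, ?_⟩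
  · -- bottom
    have hinj : Injective (Φk (0 : Fin (n + 1))) := by
      have hbij : ∀ j, Bijective (mkk 0 j) := by
        intro j
        constructor
        · rw [← MonoidHom.ker_eq_bot_iff]
          rw [QuotientGroup.ker_mk']
          exact h0 j
        · exact QuotientGroup.mk'_surjective _
      set e : ∀ j, G j ≃* G j ⧸ c j (0 : Fin (n + 1)) :=
        fun j => MulEquiv.ofBijective (mkk 0 j) (hbij j) with he
      set ρ : CoprodI (fun j => G j ⧸ c j (0 : Fin (n + 1))) →* CoprodI G :=
        CoprodI.lift (fun j => (CoprodI.of (i := j)).comp (e j).symm.toMonoidHom) with hρ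
      have hcomp : ρ.comp (Φk 0) = MonoidHom.id _ := by
        apply CoprodI.ext_hom
        intro j
        ext g
        have : (e j).symm (mkk 0 j g) = g := (e j).symm_apply_apply g
        simp [hρ, hΦk, this]
      have : Injective (ρ.comp (Φk 0)) := by
        rw [hcomp]
        exact fun a b hab => hab
      exact Injective.of_comp this
    rw [← MonoidHom.ker_eq_bot_iff] at hinj
    exact hinj
  · -- top
    haveI : ∀ j, Subsingleton (G j ⧸ c j (Fin.last n)) := by
      intro j
      rw [htop j]
      exact QuotientGroup.subsingleton_quotient_top
    haveI := NPFAux.coprodI_subsingleton (M := fun j => G j ⧸ c j (Fin.last n))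
    rw [Subgroup.eq_top_iff']
    intro x
    exact MonoidHom.mem_ker.2 (Subsingleton.elim _ _)
  · -- mono
    intro k x hx
    have hfx := DFunLike.congr_fun (hTc k) x
    rw [MonoidHom.mem_ker] at hx ⊢
    rw [← hfx]
    simp only [MonoidHom.comp_apply, hx, map_one]
  · -- free quotients
    intro k
    have hTs : ∀ j, Surjective (Tmap k j) := by
      intro j y
      obtain ⟨g, rfl⟩ := QuotientGroup.mk'_surjective (c j k.succ) y
      exact ⟨QuotientGroup.mk' _ g, by simp [hTmap]⟩
    have hker : ∀ j, IsFreeGroup ↥(Tmap k j).ker := by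
      intro j
      obtain ⟨F₀, _, fj, hF₀free, hfj_surj, hfj_ker⟩ := hfree j k
      set θ : ↥(c j k.succ) →* G j ⧸ c j k.castSucc :=
        (QuotientGroup.mk' _).comp (c j k.succ).subtype with hθ
      have hθrange : θ.range = (Tmap k j).ker := by
        ext y
        constructor
        · rintro ⟨x, rfl⟩
          rw [MonoidHom.mem_ker]
          simp only [hθ, hTmap, MonoidHom.comp_apply, Subgroup.coe_subtype,
            QuotientGroup.map_mk', MonoidHom.id_apply]
          exact (QuotientGroup.eq_one_iff _).2 x.2
        · intro hy
          obtain ⟨g, rfl⟩ := QuotientGroup.mk'_surjective (c j k.castSucc) y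
          rw [MonoidHom.mem_ker] at hy
          simp only [hTmap, QuotientGroup.map_mk', MonoidHom.id_apply] at hy
          rw [QuotientGroup.eq_one_iff] at hy
          exact ⟨⟨g, hy⟩, rfl⟩
      have hθker : θ.ker = fj.ker := by
        rw [hfj_ker]
        ext x
        rw [MonoidHom.mem_ker, Subgroup.mem_subgroupOf]
        simp only [hθ, MonoidHom.comp_apply, Subgroup.coe_subtype]
        exact QuotientGroup.eq_one_iff _
      haveI := hF₀free
      exact ((IsFreeGroup.basis F₀).map
        ((QuotientGroup.quotientKerEquivOfSurjective fj hfj_surj).symm.trans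
          (((QuotientGroup.quotientMulEquivOfEq hθker).symm.trans
            (QuotientGroup.quotientKerEquivRange θ)).trans
              (MulEquiv.subgroupCongr hθrange)))).isFreeGroup
    have hmemT : ∀ x : ↥((Φk k.succ).ker), Φk k.castSucc ↑x ∈ (T k).ker := by
      intro x
      rw [MonoidHom.mem_ker]
      have hfx := DFunLike.congr_fun (hTc k) (x : CoprodI G)
      simp only [MonoidHom.comp_apply] at hfx
      rw [hfx]
      exact x.2
    refine ⟨↥(T k).ker, inferInstance,
      ((Φk k.castSucc).domRestrict ((Φk k.succ).ker)).codRestrict (T k).ker hmemT,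
      NPFAux.isFreeGroup_ker_phi (Tmap k) hTs hker, ?_, ?_⟩
    · rintro ⟨y, hy⟩
      obtain ⟨g, hg⟩ := NPFAux.Phi_surjective (mkk k.castSucc)
        (fun j => QuotientGroup.mk'_surjective _) y
      have hgmem : g ∈ (Φk k.succ).ker := by
        rw [MonoidHom.mem_ker]
        have hfx := DFunLike.congr_fun (hTc k) g
        simp only [MonoidHom.comp_apply] at hfx
        rw [← hfx, hg]
        exact MonoidHom.mem_ker.1 hy
      exact ⟨⟨g, hgmem⟩, Subtype.ext hg⟩
    · ext x
      rw [MonoidHom.mem_ker, Subgroup.mem_subgroupOf]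
      rw [Subtype.ext_iff]
      simp only [MonoidHom.codRestrict_apply, MonoidHom.domRestrict_apply, OneMemClass.coe_one]
      exact Iff.symm MonoidHom.mem_ker
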